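/- Let f : [0,∞) → [0,∞) be non-decreasing with f(x) → ∞. Then there exists a strictly increasing, strictly concave function g : [0,∞) → [0,∞) and a constant x* ≥ 0 such that g(x) → ∞ as x → ∞ and g(x) ≤ f(x) for all x ≥ x*. -/

import Mathlib

open Filter Set

private lemma deriv_q_aux (x : ℝ) (hx : (0:ℝ) < x) :
    deriv (fun y : ℝ => -(y+1)⁻¹) x = ((x+1)^2)⁻¹ := by
  have h1 : HasDerivAt (fun y : ℝ => y + 1) 1 x := (hasDerivAt_id x).add_const 1
  have h2 : HasDerivAt (fun y : ℝ => (y+1)⁻¹) (-1 / (x+1)^2) x :=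
    h1.inv (by positivity)
  have h3 : HasDerivAt (fun y : ℝ => -(y+1)⁻¹) (-(-1 / (x+1)^2)) x := h2.neg
  rw [h3.deriv]
  field_simp

private lemma q_strictConcave : StrictConcaveOn ℝ (Set.Ici (0:ℝ)) (fun x : ℝ => -(x+1)⁻¹) := by
  apply StrictAntiOn.strictConcaveOn_of_deriv (convex_Ici 0)
  · apply ContinuousOn.neg
    apply ContinuousOn.inv₀ (by fun_prop)
    intro x hx
    have : (0:ℝ) ≤ x := hx
    positivity
  · rw [interior_Ici]
    intro x hx y hy hxy
    have hx' : (0:ℝ) < x := hx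
    have hy' : (0:ℝ) < y := hy
    rw [deriv_q_aux x hx', deriv_q_aux y hy']
    apply inv_strictAnti₀ (by positivity)
    nlinarith

theorem exists_concave_minorant (f : ℝ → ℝ)
    (hmono : MonotoneOn f (Set.Ici 0))
    (hnonneg : ∀ x : ℝ, 0 ≤ x → 0 ≤ f x)
    (htop : Filter.Tendsto f Filter.atTop Filter.atTop) :
    ∃ g : ℝ → ℝ, StrictMonoOn g (Set.Ici 0) ∧ StrictConcaveOn ℝ (Set.Ici 0) g ∧
      (∀ x : ℝ, 0 ≤ x → 0 ≤ g x) ∧ Filter.Tendsto g Filter.atTop Filter.atTop ∧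
      ∃ xstar : ℝ, 0 ≤ xstar ∧ ∀ x : ℝ, xstar ≤ x → g x ≤ f x := by
  classical
  -- thresholds: f x ≥ n + 3 for x ≥ A n, with A n ≥ 0
  have hA : ∀ n : ℕ, ∃ a : ℝ, 0 ≤ a ∧ ∀ x : ℝ, a ≤ x → (n : ℝ) + 3 ≤ f x := by
    intro n
    obtain ⟨a, ha⟩ := eventually_atTop.mp (tendsto_atTop.mp htop ((n : ℝ) + 3))
    exact ⟨max a 0, le_max_right _ _, fun x hx => ha x ((le_max_left a 0).trans hx)⟩
  choose A hA0 hAf using hA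
  -- fast growing sequence b
  set b : ℕ → ℝ := fun n =>
    Nat.rec (max (A 0) 0) (fun k bk => max (A (k+1)) (2 * bk + 1)) n with hbdef
  have hb0 : b 0 = max (A 0) 0 := rfl
  have hbsucc : ∀ n, b (n+1) = max (A (n+1)) (2 * b n + 1) := fun n => rfl
  have hbnn : ∀ n, 0 ≤ b n := by
    intro n
    induction n with
    | zero => rw [hb0]; exact le_max_right _ _
    | succ k ih => rw [hbsucc]; exact le_trans (by linarith) (le_max_right _ _)
  have hAb : ∀ n, A n ≤ b n := by
    intro n
    cases n with
    | zero => rw [hb0]; exact le_max_left _ _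
    | succ k => rw [hbsucc]; exact le_max_left _ _
  have hstep : ∀ n, 2 * b n + 1 ≤ b (n+1) := fun n => by
    rw [hbsucc]; exact le_max_right _ _
  set d : ℕ → ℝ := fun n => b (n+1) - b n with hddef
  have hd1 : ∀ n, b n + 1 ≤ d n := by
    intro n
    have := hstep n
    have := hbnn n
    simp only [hddef]
    linarith
  have hdpos : ∀ n, 0 < d n := fun n => lt_of_lt_of_le (by linarith [hbnn n]) (hd1 n)
  have hdmono : Monotone d := by
    apply monotone_nat_of_le_succ
    intro n
    have h1 := hd1 (n+1)
    have h2 := hbnn n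
    simp only [hddef] at h1 ⊢
    linarith
  have hbn : ∀ n : ℕ, (n : ℝ) ≤ b n := by
    intro n
    induction n with
    | zero => exact_mod_cast hbnn 0
    | succ k ih =>
      have := hstep k
      have := hbnn k
      push_cast
      linarith
  have hgap : ∀ k m : ℕ, (m : ℝ) * d k ≤ b (k + m) - b k := by
    intro k m
    induction m with
    | zero => simp
    | succ j ih =>
      have h1 : d k ≤ d (k + j) := hdmono (Nat.le_add_right k j)
      have h2 : b (k + j) + d (k + j) = b (k + j + 1) := by simp [hddef]
      push_cast
      have : k + (j + 1) = (k + j) + 1 := by ring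
      rw [this]
      linarith
  -- the affine functions and their infimum
  set L : ℕ → ℝ → ℝ := fun n x => (n : ℝ) + (x - b n) / d n with hLdef
  set g0 : ℝ → ℝ := fun x => ⨅ n, L n x with hg0def
  have hLlb : ∀ x : ℝ, 0 ≤ x → ∀ n : ℕ, (n : ℝ) - 1 ≤ L n x := by
    intro x hx n
    have hdiv : -1 ≤ (x - b n) / d n := by
      rw [le_div_iff₀ (hdpos n)]
      have := hd1 n
      linarith
    simp only [hLdef]
    linarith
  have hbdd : ∀ x : ℝ, 0 ≤ x → BddBelow (Set.range fun n => L n x) := by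
    intro x hx
    refine ⟨-1, fun v hv => ?_⟩
    obtain ⟨n, rfl⟩ := hv
    have := hLlb x hx n
    have : (0:ℝ) ≤ n := Nat.cast_nonneg n
    linarith [hLlb x hx n]
  have hg0le : ∀ x : ℝ, 0 ≤ x → ∀ n, g0 x ≤ L n x := fun x hx n =>
    ciInf_le (hbdd x hx) n
  have hg0mono : ∀ x y : ℝ, 0 ≤ x → x ≤ y → g0 x ≤ g0 y := by
    intro x y hx hxy
    refine le_ciInf fun n => (hg0le x hx n).trans ?_
    simp only [hLdef]
    gcongr
    exact (hdpos n).le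
  have hg0lb : ∀ x : ℝ, 0 ≤ x → -1 ≤ g0 x := by
    intro x hx
    refine le_ciInf fun n => ?_
    have := hLlb x hx n
    have h2 : (0:ℝ) ≤ n := Nat.cast_nonneg n
    linarith
  have hg0conc : ConcaveOn ℝ (Set.Ici 0) g0 := by
    refine ⟨convex_Ici 0, fun x hx y hy a c ha hc hac => ?_⟩
    have hx' : (0:ℝ) ≤ x := hx
    have hy' : (0:ℝ) ≤ y := hy
    refine le_ciInf fun n => ?_
    have hc' : c = 1 - a := by linarith
    subst hc'
    have key : L n (a • x + (1-a) • y) = a * L n x + (1-a) * L n y := by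
      have hdn : d n ≠ 0 := (hdpos n).ne'
      simp only [hLdef, smul_eq_mul]
      field_simp
      ring
    rw [key]
    simp only [smul_eq_mul]
    have h1 : a * g0 x ≤ a * L n x := mul_le_mul_of_nonneg_left (hg0le x hx' n) ha
    have h2 : (1-a) * g0 y ≤ (1-a) * L n y := mul_le_mul_of_nonneg_left (hg0le y hy' n) hc
    linarith
  -- lower bound for tendsto
  have hlow : ∀ n : ℕ, ∀ x : ℝ, 0 ≤ x → b n ≤ x → (n : ℝ) - 1 ≤ g0 x := by
    intro n x hx hbx
    refine le_ciInf fun k => ?_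
    rcases le_or_gt n k with h | h
    · have := hLlb x hx k
      have : (n : ℝ) ≤ k := Nat.cast_le.mpr h
      linarith [hLlb x hx k]
    · have hkn : k ≤ n := h.le
      have hg := hgap k (n - k)
      rw [Nat.add_sub_cancel' hkn] at hg
      have hcast : ((n - k : ℕ) : ℝ) = (n : ℝ) - k := by
        rw [Nat.cast_sub hkn]
      rw [hcast] at hg
      have hdiv : (n : ℝ) - k ≤ (x - b k) / d k := by
        rw [le_div_iff₀ (hdpos k)]
        linarith
      simp only [hLdef]
      linarith
  -- the function g
  refine ⟨fun x => (g0 x + 2) + (-(x + 1)⁻¹), ?_, ?_, ?_, ?_, ?_⟩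
  · -- StrictMonoOn
    intro x hx y hy hxy
    have hx' : (0:ℝ) ≤ x := hx
    have h1 : g0 x ≤ g0 y := hg0mono x y hx' hxy.le
    have h2 : (y + 1)⁻¹ < (x + 1)⁻¹ := by
      apply inv_strictAnti₀ (by linarith) (by linarith)
    dsimp only
    linarith
  · -- StrictConcaveOn
    exact (hg0conc.add_const 2).add_strictConcaveOn q_strictConcave
  · -- nonneg
    intro x hx
    have h1 := hg0lb x hx
    have h2 : (x + 1)⁻¹ ≤ 1 := by
      rw [inv_le_one_iff₀]
      right; linarith
    dsimp only
    linarith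
  · -- tendsto atTop
    rw [tendsto_atTop]
    intro C
    obtain ⟨n, hn⟩ := exists_nat_ge C
    rw [eventually_atTop]
    refine ⟨max (b (n+1)) 0, fun x hx => ?_⟩
    have hx0 : (0:ℝ) ≤ x := le_trans (le_max_right _ _) hx
    have hbx : b (n+1) ≤ x := le_trans (le_max_left _ _) hx
    have h1 := hlow (n+1) x hx0 hbx
    have h2 : (x + 1)⁻¹ ≤ 1 := by
      rw [inv_le_one_iff₀]; right; linarith
    push_cast at h1
    linarith
  · -- minorant
    refine ⟨b 0, hbnn 0, fun x hx => ?_⟩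
    have hx0 : (0:ℝ) ≤ x := le_trans (hbnn 0) hx
    have hex : ∃ m, x < b m := by
      obtain ⟨m, hm⟩ := exists_nat_gt x
      exact ⟨m, lt_of_lt_of_le hm (hbn m)⟩
    set N := Nat.find hex with hNdef
    have hNspec : x < b N := Nat.find_spec hex
    have hN0 : N ≠ 0 := by
      intro h
      rw [h] at hNspec
      linarith
    obtain ⟨n, hn⟩ := Nat.exists_eq_succ_of_ne_zero hN0
    have hxlt : x < b (n+1) := by rw [hn] at hNspec; exact hNspec
    have hble : b n ≤ x := by
      by_contra hcon
      push_neg at hcon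
      have := Nat.find_min hex (m := n) (by omega)
      exact this hcon
    have hLn : L n x ≤ (n : ℝ) + 1 := by
      simp only [hLdef]
      have : (x - b n) / d n ≤ 1 := by
        rw [div_le_one (hdpos n)]
        simp only [hddef]
        linarith
      linarith
    have hfx : (n : ℝ) + 3 ≤ f x := hAf n x (le_trans (hAb n) hble)
    have hinv : 0 ≤ (x + 1)⁻¹ := by positivity
    have := hg0le x hx0 n
    dsimp only
    linarith
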